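/- Define d(n,m) for n ≥ 2, m ≥ -1 by d(n,-1) = 0, d(2,0) = 1/3, d(2,m) = 0 for m ≥ 1, and d(n,m) = ((3n+m-4)/(3n+m-6)) * d(n-1,m+1) + ((3n+m-4)/(3n+3m)) * d(n-1,m-1) for n ≥ 3, m ≥ 0. Let b satisfy b(1,1) = 1, b(n,m) = 0 for n < m or m = 0, and b(n,m) = (2n+m-2) * ∑_{k=1}^{m} b(n-1,k) for n ≥ 2, 1 ≤ m ≤ n. Then for all n ≥ 2, b(n,n) = 3^n * n! * d(2n,0), and more generally d(p,q) = b((p+q)/2, (p-q)/2) / (3^{(p+q)/2} * ((p+q)/2)!) whenever p - q is even, p ≥ 4, 0 ≤ q ≤ p. -/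

import Mathlib

/-- The double sequence `b(n,m)` from the enumeration of tree-child networks:
`b(1,1) = 1`, `b(n,m) = 0` if `n < m` or `m = 0`, and for `n ≥ 2`,
`1 ≤ m ≤ n`, `b(n,m) = (2n+m-2) * ∑_{k=1}^m b(n-1,k)`. -/
def bseq : ℕ → ℕ → ℚ
  | 0, _ => 0
  | 1, m => if m = 1 then 1 else 0
  | n+2, m =>
      if m = 0 ∨ n + 2 < m then 0
      else ((2*(n+2)+m-2 : ℕ) : ℚ) * ∑ k ∈ Finset.Icc 1 m, bseq (n+1) k

/-- The normalized double sequence `d(n,m)`: `d(n,-1) = 0`, `d(2,0) = 1/3`,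
`d(2,m) = 0` for `m ≥ 1`, and for `n ≥ 3`, `m ≥ 0`,
`d(n,m) = ((3n+m-4)/(3n+m-6))·d(n-1,m+1) + ((3n+m-4)/(3n+3m))·d(n-1,m-1)`. -/
def dseq : ℕ → ℤ → ℚ
  | 0, _ => 0
  | 1, _ => 0
  | 2, m => if m = 0 then 1/3 else 0
  | (n+3), m =>
      if m < 0 then 0
      else ((3 * ((n : ℚ) + 3) + (m : ℚ) - 4) / (3 * ((n : ℚ) + 3) + (m : ℚ) - 6))
             * dseq (n + 2) (m + 1)
        + ((3 * ((n : ℚ) + 3) + (m : ℚ) - 4) / (3 * ((n : ℚ) + 3) + 3 * (m : ℚ)))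
             * dseq (n + 2) (m - 1)

lemma bseq_zero {n m : ℕ} (h : m = 0 ∨ n < m) : bseq n m = 0 := by
  match n with
  | 0 => rfl
  | 1 => have : m ≠ 1 := by omega
         simp [bseq, this]
  | k+2 => rw [bseq, if_pos h]

lemma dseq_neg {n : ℕ} {m : ℤ} (h : m < 0) : dseq n m = 0 := by
  match n with
  | 0 => rfl
  | 1 => rfl
  | 2 => have : m ≠ 0 := by omega
         simp [dseq, this]
  | k+3 => rw [dseq, if_pos h]

lemma dseq_zero : ∀ (n : ℕ) (m : ℤ), (n : ℤ) < m → dseq n m = 0 := by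
  intro n
  induction n using Nat.strong_induction_on with
  | _ n ih =>
    intro m h
    match n with
    | 0 => rfl
    | 1 => rfl
    | 2 => have : m ≠ 0 := by omega
           simp [dseq, this]
    | k+3 =>
      rw [dseq, if_neg (by omega)]
      rw [ih (k+2) (by omega) (m+1) (by push_cast at h ⊢; omega),
          ih (k+2) (by omega) (m-1) (by push_cast at h ⊢; omega)]
      ring

lemma bseq_step (N M : ℕ) (hN : 2 ≤ N) (hM : 1 ≤ M) (hMN : M ≤ N) :
    bseq N M = (2*(N:ℚ)+M-2)/(2*(N:ℚ)+M-3) * bseq N (M-1)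
      + (2*(N:ℚ)+M-2) * bseq (N-1) M := by
  obtain ⟨k, rfl⟩ : ∃ k, N = k + 2 := ⟨N - 2, by omega⟩
  rw [bseq, if_neg (by omega)]
  have hsum : ∑ x ∈ Finset.Icc 1 M, bseq (k+1) x
      = (∑ x ∈ Finset.Icc 1 (M-1), bseq (k+1) x) + bseq (k+1) M := by
    have hM' : M = (M-1) + 1 := by omega
    rw [hM', Finset.sum_Icc_succ_top (by omega)]
    congr 1 <;> omega
  have h21 : (k+2-1 : ℕ) = k+1 := by omega
  have hcast1 : ((2*(k+2)+M-2 : ℕ) : ℚ) = 2*((k:ℚ)+2)+M-2 := by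
    rw [show 2*(k+2)+M-2 = 2*k+2+M by omega]; push_cast; ring
  rcases Nat.eq_or_lt_of_le hM with h1 | h1
  · have hM1 : M = 1 := h1.symm
    subst hM1
    simp only [Nat.sub_self]
    rw [bseq_zero (Or.inl rfl)]
    simp only [Finset.Icc_self, Finset.sum_singleton, h21, hcast1]
    push_cast
    ring
  · have hB : bseq (k+2) (M-1) = ((2*(k+2)+(M-1)-2 : ℕ) : ℚ)
        * ∑ x ∈ Finset.Icc 1 (M-1), bseq (k+1) x := by
      rw [bseq, if_neg (by omega)]
    rw [hsum, hB]
    have hM2 : (2:ℚ) ≤ (M:ℚ) := by exact_mod_cast h1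
    have hk0 : (0:ℚ) ≤ (k:ℚ) := Nat.cast_nonneg k
    have hne : 2*((k:ℚ)+2)+M-3 ≠ 0 := by nlinarith
    have hcast2 : ((2*(k+2)+(M-1)-2 : ℕ) : ℚ) = 2*((k:ℚ)+2)+M-3 := by
      rw [show 2*(k+2)+(M-1)-2 = 2*k+1+M by omega]; push_cast; ring
    rw [hcast1, hcast2, h21]
    push_cast
    field_simp

lemma main' : ∀ (s N M : ℕ), N + M = s → M ≤ N → 2 ≤ s →
    dseq (N+M) ((N:ℤ)-(M:ℤ)) = bseq N M / ((3:ℚ)^N * (N.factorial : ℚ)) := by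
  intro s
  induction s using Nat.strong_induction_on with
  | _ s ih =>
    intro N M hs hMN h2
    rcases Nat.lt_or_ge s 3 with h3 | h3
    · -- s = 2 : (N,M) = (1,1) or (2,0)
      have hcase : (N = 1 ∧ M = 1) ∨ (N = 2 ∧ M = 0) := by omega
      rcases hcase with ⟨rfl, rfl⟩ | ⟨rfl, rfl⟩ <;>
        norm_num [dseq, bseq, Nat.factorial]
    · -- s ≥ 3
      obtain ⟨n, hn⟩ : ∃ n, N + M = n + 3 := ⟨s - 3, by omega⟩
      have hD : (3:ℚ)^N * (N.factorial : ℚ) ≠ 0 := by positivity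
      rcases Nat.eq_zero_or_pos M with hM0 | hM1
      · -- M = 0 case: everything is zero
        subst hM0
        simp only [Nat.cast_zero, sub_zero]
        rw [hn, dseq, if_neg (by omega)]
        have hz1 : dseq (n+2) ((N:ℤ) + 1) = 0 := dseq_zero _ _ (by omega)
        have hz2 : dseq (n+2) ((N:ℤ) - 1) = 0 := by
          have := ih (s-1) (by omega) (N-1) 0 (by omega) (by omega) (by omega)
          rw [bseq_zero (Or.inl rfl)] at this
          rw [show ((N:ℤ) - 1) = ((N-1 : ℕ) : ℤ) - ((0:ℕ):ℤ) by omega,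
              show (n+2) = (N-1) + 0 by omega, this]
          simp
        rw [hz1, hz2, bseq_zero (Or.inl rfl)]
        simp
      · -- M ≥ 1
        have hN2 : 2 ≤ N := by omega
        -- term 1 : dseq (n+2) (q+1) = bseq N (M-1) / (3^N N!)
        have hT1 : dseq (n+2) ((N:ℤ)-(M:ℤ)+1) = bseq N (M-1) / ((3:ℚ)^N * (N.factorial : ℚ)) := by
          have := ih (s-1) (by omega) N (M-1) (by omega) (by omega) (by omega)
          rw [show ((N:ℤ)-(M:ℤ)+1) = ((N:ℤ) - ((M-1:ℕ):ℤ)) by omega,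
              show (n+2) = N + (M-1) by omega]
          exact this
        -- term 2 : dseq (n+2) (q-1) = bseq (N-1) M / (3^(N-1) (N-1)!)
        have hT2 : dseq (n+2) ((N:ℤ)-(M:ℤ)-1)
            = bseq (N-1) M / ((3:ℚ)^(N-1) * ((N-1).factorial : ℚ)) := by
          rcases Nat.eq_or_lt_of_le hMN with e | lt
          · -- M = N : q = 0, term is dseq _ (-1) = 0, and bseq (N-1) N = 0
            rw [dseq_neg (by omega), bseq_zero (Or.inr (by omega : N - 1 < M)), zero_div]
          · have := ih (s-1) (by omega) (N-1) M (by omega) (by omega) (by omega)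
            rw [show ((N:ℤ)-(M:ℤ)-1) = (((N-1:ℕ):ℤ) - (M:ℤ)) by omega,
                show (n+2) = (N-1) + M by omega]
            exact this
        rw [hn, dseq, if_neg (by omega), hT1, hT2]
        -- now pure algebra
        have hstep := bseq_step N M hN2 hM1 hMN
        have hcN : (3:ℚ)^N * (N.factorial : ℚ)
            = 3 * N * ((3:ℚ)^(N-1) * ((N-1).factorial : ℚ)) := by
          rw [show N = (N-1)+1 by omega]
          simp [Nat.factorial_succ, pow_succ]
          push_cast
          ring
        have hq : (((N:ℤ)-(M:ℤ) : ℤ) : ℚ) = (N:ℚ) - (M:ℚ) := by push_cast; ring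
        have hPQ : ((n:ℚ)+3) = (N:ℚ) + (M:ℚ) := by
          have h' : ((n+3 : ℕ) : ℚ) = ((N + M : ℕ) : ℚ) := by rw [hn]
          push_cast at h'
          linarith
        rw [hq, hPQ, hstep, hcN]
        have ha : (2:ℚ) ≤ (N:ℚ) := by exact_mod_cast hN2
        have hb : (1:ℚ) ≤ (M:ℚ) := by exact_mod_cast hM1
        have h1 : 2*(N:ℚ)+(M:ℚ)-3 ≠ 0 := by linarith
        have hd2 : 3*((N:ℚ)+(M:ℚ)) + ((N:ℚ)-(M:ℚ)) - 6 ≠ 0 := by linarith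
        have hd3 : 3*((N:ℚ)+(M:ℚ)) + 3*((N:ℚ)-(M:ℚ)) ≠ 0 := by linarith
        have h4 : (N:ℚ) ≠ 0 := by linarith
        have hD2 : (3:ℚ)^(N-1) * (((N-1).factorial : ℕ) : ℚ) ≠ 0 := by positivity
        have e1 : 3*((N:ℚ)+(M:ℚ)) + ((N:ℚ)-(M:ℚ)) - 6 = 2*(2*N+M-3) := by ring
        have e2 : 3*((N:ℚ)+(M:ℚ)) + 3*((N:ℚ)-(M:ℚ)) = 6*N := by ring
        rw [e1, e2]
        field_simp
        ring

theorem dseq_eq_normalized_bseq :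
    (∀ n : ℕ, 2 ≤ n →
      bseq n n = (3 ^ n : ℚ) * (Nat.factorial n : ℚ) * dseq (2 * n) 0) ∧
    (∀ p q : ℕ, 4 ≤ p → q ≤ p → (p - q) % 2 = 0 →
      dseq p (q : ℤ)
        = bseq ((p + q) / 2) ((p - q) / 2)
          / ((3 ^ ((p + q) / 2) : ℚ) * (Nat.factorial ((p + q) / 2) : ℚ))) := by
  constructor
  · intro n hn
    have h := main' (2*n) n n (by omega) le_rfl (by omega)
    rw [show ((n:ℤ) - (n:ℤ)) = 0 by ring, show n + n = 2*n by ring] at h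
    rw [h]
    have : (3:ℚ)^n * (n.factorial : ℚ) ≠ 0 := by positivity
    field_simp
  · intro p q hp hqp hpar
    have h := main' p ((p+q)/2) ((p-q)/2) (by omega) (by omega) (by omega)
    rw [show ((p+q)/2 + (p-q)/2) = p by omega,
        show ((((p+q)/2 : ℕ):ℤ) - (((p-q)/2 : ℕ):ℤ)) = (q:ℤ) by omega] at h
    exact h
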